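/- Let f₁,…,f₁₀ be the ten quintics of the classifying map, in the stated order. For all a, x, y, z ∈ ℂ, regard each fᵢ(1, a, a+tx, a+ty, a+tz) as a polynomial in t. Then its constant coefficient is 0 and its coefficient of t equals 2a²(1−a²)·cᵢ, where (c₁,…,c₁₀) = (0, 0, y−z, x−z, y−z, −z, x−z, −z, x−y, −x). Hence for a ∉ {0, ±1}, limit as t→0 of Φ(1 : a : a+tx : a+ty : a+tz) is the point (0 : 0 : y−z : x−z : y−z : −z : x−z : −z : x−y : −x) ∈ ℙ⁹, independent of a; so the exceptional divisor over the line {(s:t:t:t:t)} is contracted by Φ to a plane in ℙ⁹. -/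
import Mathlib


/-- The ten quintics `f₁,…,f₁₀` giving the classifying map `Φ : ℙ⁴ ⇢ ℙ⁹`
(indices 0-based: `v 0 = x₁, …, v 4 = x₅`). -/
def quintics {R : Type*} [CommRing R] (v : Fin 5 → R) : Fin 10 → R :=
  ![v 0 * (v 1 ^ 2 - v 2 ^ 2) * (v 3 ^ 2 - v 4 ^ 2),
    v 0 * (v 1 ^ 2 - v 4 ^ 2) * (v 2 ^ 2 - v 3 ^ 2),
    v 1 * (v 0 ^ 2 - v 2 ^ 2) * (v 3 ^ 2 - v 4 ^ 2),
    v 1 * (v 0 ^ 2 - v 3 ^ 2) * (v 2 ^ 2 - v 4 ^ 2),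
    v 2 * (v 0 ^ 2 - v 1 ^ 2) * (v 3 ^ 2 - v 4 ^ 2),
    v 2 * (v 0 ^ 2 - v 3 ^ 2) * (v 1 ^ 2 - v 4 ^ 2),
    v 3 * (v 0 ^ 2 - v 1 ^ 2) * (v 2 ^ 2 - v 4 ^ 2),
    v 3 * (v 0 ^ 2 - v 2 ^ 2) * (v 1 ^ 2 - v 4 ^ 2),
    v 4 * (v 0 ^ 2 - v 1 ^ 2) * (v 2 ^ 2 - v 3 ^ 2),
    v 4 * (v 0 ^ 2 - v 3 ^ 2) * (v 1 ^ 2 - v 2 ^ 2)]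

open Polynomial

lemma coeff_one_eq_eval_zero_derivative (p : ℂ[X]) :
    p.coeff 1 = (derivative p).eval 0 := by
  rw [← coeff_zero_eq_eval_zero, coeff_derivative]; norm_num

lemma quinticAux0 (a x y z : ℂ) :
    (1 * ((C a)^2 - (C a + C x*X)^2) * ((C a + C y*X)^2 - (C a + C z*X)^2)).coeff 0 = 0 ∧
    (1 * ((C a)^2 - (C a + C x*X)^2) * ((C a + C y*X)^2 - (C a + C z*X)^2)).coeff 1 = 2 * a ^ 2 * (1 - a ^ 2) * 0 := by
  constructor
  · simp [coeff_zero_eq_eval_zero]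
  · rw [coeff_one_eq_eval_zero_derivative]
    simp [derivative_mul, derivative_pow]
    try ring

lemma quinticAux1 (a x y z : ℂ) :
    (1 * ((C a)^2 - (C a + C z*X)^2) * ((C a + C x*X)^2 - (C a + C y*X)^2)).coeff 0 = 0 ∧
    (1 * ((C a)^2 - (C a + C z*X)^2) * ((C a + C x*X)^2 - (C a + C y*X)^2)).coeff 1 = 2 * a ^ 2 * (1 - a ^ 2) * 0 := by
  constructor
  · simp [coeff_zero_eq_eval_zero]
  · rw [coeff_one_eq_eval_zero_derivative]
    simp [derivative_mul, derivative_pow]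
    try ring

lemma quinticAux2 (a x y z : ℂ) :
    (C a * (1^2 - (C a + C x*X)^2) * ((C a + C y*X)^2 - (C a + C z*X)^2)).coeff 0 = 0 ∧
    (C a * (1^2 - (C a + C x*X)^2) * ((C a + C y*X)^2 - (C a + C z*X)^2)).coeff 1 = 2 * a ^ 2 * (1 - a ^ 2) * (y - z) := by
  constructor
  · simp [coeff_zero_eq_eval_zero]
  · rw [coeff_one_eq_eval_zero_derivative]
    simp [derivative_mul, derivative_pow]
    try ring

lemma quinticAux3 (a x y z : ℂ) :
    (C a * (1^2 - (C a + C y*X)^2) * ((C a + C x*X)^2 - (C a + C z*X)^2)).coeff 0 = 0 ∧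
    (C a * (1^2 - (C a + C y*X)^2) * ((C a + C x*X)^2 - (C a + C z*X)^2)).coeff 1 = 2 * a ^ 2 * (1 - a ^ 2) * (x - z) := by
  constructor
  · simp [coeff_zero_eq_eval_zero]
  · rw [coeff_one_eq_eval_zero_derivative]
    simp [derivative_mul, derivative_pow]
    try ring

lemma quinticAux4 (a x y z : ℂ) :
    ((C a + C x*X) * (1^2 - (C a)^2) * ((C a + C y*X)^2 - (C a + C z*X)^2)).coeff 0 = 0 ∧
    ((C a + C x*X) * (1^2 - (C a)^2) * ((C a + C y*X)^2 - (C a + C z*X)^2)).coeff 1 = 2 * a ^ 2 * (1 - a ^ 2) * (y - z) := by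
  constructor
  · simp [coeff_zero_eq_eval_zero]
  · rw [coeff_one_eq_eval_zero_derivative]
    simp [derivative_mul, derivative_pow]
    try ring

lemma quinticAux5 (a x y z : ℂ) :
    ((C a + C x*X) * (1^2 - (C a + C y*X)^2) * ((C a)^2 - (C a + C z*X)^2)).coeff 0 = 0 ∧
    ((C a + C x*X) * (1^2 - (C a + C y*X)^2) * ((C a)^2 - (C a + C z*X)^2)).coeff 1 = 2 * a ^ 2 * (1 - a ^ 2) * (-z) := by
  constructor
  · simp [coeff_zero_eq_eval_zero]
  · rw [coeff_one_eq_eval_zero_derivative]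
    simp [derivative_mul, derivative_pow]
    try ring

lemma quinticAux6 (a x y z : ℂ) :
    ((C a + C y*X) * (1^2 - (C a)^2) * ((C a + C x*X)^2 - (C a + C z*X)^2)).coeff 0 = 0 ∧
    ((C a + C y*X) * (1^2 - (C a)^2) * ((C a + C x*X)^2 - (C a + C z*X)^2)).coeff 1 = 2 * a ^ 2 * (1 - a ^ 2) * (x - z) := by
  constructor
  · simp [coeff_zero_eq_eval_zero]
  · rw [coeff_one_eq_eval_zero_derivative]
    simp [derivative_mul, derivative_pow]
    try ring

lemma quinticAux7 (a x y z : ℂ) :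
    ((C a + C y*X) * (1^2 - (C a + C x*X)^2) * ((C a)^2 - (C a + C z*X)^2)).coeff 0 = 0 ∧
    ((C a + C y*X) * (1^2 - (C a + C x*X)^2) * ((C a)^2 - (C a + C z*X)^2)).coeff 1 = 2 * a ^ 2 * (1 - a ^ 2) * (-z) := by
  constructor
  · simp [coeff_zero_eq_eval_zero]
  · rw [coeff_one_eq_eval_zero_derivative]
    simp [derivative_mul, derivative_pow]
    try ring

lemma quinticAux8 (a x y z : ℂ) :
    ((C a + C z*X) * (1^2 - (C a)^2) * ((C a + C x*X)^2 - (C a + C y*X)^2)).coeff 0 = 0 ∧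
    ((C a + C z*X) * (1^2 - (C a)^2) * ((C a + C x*X)^2 - (C a + C y*X)^2)).coeff 1 = 2 * a ^ 2 * (1 - a ^ 2) * (x - y) := by
  constructor
  · simp [coeff_zero_eq_eval_zero]
  · rw [coeff_one_eq_eval_zero_derivative]
    simp [derivative_mul, derivative_pow]
    try ring

lemma quinticAux9 (a x y z : ℂ) :
    ((C a + C z*X) * (1^2 - (C a + C y*X)^2) * ((C a)^2 - (C a + C x*X)^2)).coeff 0 = 0 ∧
    ((C a + C z*X) * (1^2 - (C a + C y*X)^2) * ((C a)^2 - (C a + C x*X)^2)).coeff 1 = 2 * a ^ 2 * (1 - a ^ 2) * (-x) := by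
  constructor
  · simp [coeff_zero_eq_eval_zero]
  · rw [coeff_one_eq_eval_zero_derivative]
    simp [derivative_mul, derivative_pow]
    try ring

/-- Near the line `{(s:t:t:t:t)}`: each `fᵢ(1, a, a+tx, a+ty, a+tz)`, as a
polynomial in `t`, has constant coefficient `0` and `t`-coefficient
`2a²(1−a²)·cᵢ` with `c = (0,0,y−z,x−z,y−z,−z,x−z,−z,x−y,−x)`; hence for
`a ∉ {0,±1}` the limit as `t → 0` of `Φ(1:a:a+tx:a+ty:a+tz)` is
`(0:0:y−z:x−z:y−z:−z:x−z:−z:x−y:−x)`, independent of `a`. -/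
theorem contraction_over_line_l (a x y z : ℂ) (i : Fin 10) :
    (quintics ![1, C a, C a + C x * X, C a + C y * X, C a + C z * X] i).coeff 0 = 0 ∧
    (quintics ![1, C a, C a + C x * X, C a + C y * X, C a + C z * X] i).coeff 1 =
      2 * a ^ 2 * (1 - a ^ 2) *
        (![0, 0, y - z, x - z, y - z, -z, x - z, -z, x - y, -x] i) := by
  fin_cases i
  exacts [quinticAux0 a x y z, quinticAux1 a x y z, quinticAux2 a x y z,
    quinticAux3 a x y z, quinticAux4 a x y z, quinticAux5 a x y z,
    quinticAux6 a x y z, quinticAux7 a x y z, quinticAux8 a x y z,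
    quinticAux9 a x y z]
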